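/- Combined error bound for ridge fit-and-transfer: with Y = U V^T + ℰ, Y_v = U v + ℰ_v, v = V^T b + e, Σ̃, Σ̂ symmetric PSD, λ > 0, γ̃, γ̂ ∈ ℝ^m, β* = (Σ̃+λI)^{-1} γ̃, β̂ = (Σ̂+λI)^{-1} γ̂, Ŷ_v = Y β̂, and r = Y_v − Y β*, one has ‖Ŷ_v − Y_v‖₂ ≤ ‖r‖₂ + (‖Y‖₂/(σ_min(Σ̂)+λ))(‖Σ̂ − Σ̃‖₂‖β*‖₂ + ‖γ̂ − γ̃‖₂), and moreover ‖r‖₂ ≤ ‖U e‖₂ + ‖ℰ_v − ℰ b‖₂ + (‖Y‖₂/(σ_min(Σ̃)+λ))(λ‖b‖₂ + ‖γ̃ − Σ̃ b‖₂). -/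

import Mathlib

open Matrix

noncomputable def enorm' {n : ℕ} (x : Fin n → ℝ) : ℝ :=
  Real.sqrt (∑ i, x i ^ 2)

noncomputable def opNorm {n m : ℕ} (M : Matrix (Fin n) (Fin m) ℝ) : ℝ :=
  sSup {c : ℝ | ∃ x : Fin m → ℝ, enorm' x = 1 ∧ c = enorm' (M.mulVec x)}

noncomputable def sigmaMin {m : ℕ} {A : Matrix (Fin m) (Fin m) ℝ}
    (hA : A.IsHermitian) : ℝ :=
  ⨅ i, hA.eigenvalues i

/-! ### Auxiliary lemmas about `enorm'` -/

lemma enorm'_eq_norm {n : ℕ} (x : Fin n → ℝ) :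
    enorm' x = ‖(WithLp.equiv 2 (Fin n → ℝ)).symm x‖ := by
  simp [enorm', EuclideanSpace.norm_eq, sq_abs]

lemma my_enorm_nonneg {n : ℕ} (x : Fin n → ℝ) : 0 ≤ enorm' x := Real.sqrt_nonneg _

lemma my_enorm_add_le {n : ℕ} (x y : Fin n → ℝ) : enorm' (x + y) ≤ enorm' x + enorm' y := by
  rw [enorm'_eq_norm, enorm'_eq_norm, enorm'_eq_norm]
  exact norm_add_le _ _

lemma my_enorm_sub_le {n : ℕ} (x y : Fin n → ℝ) : enorm' (x - y) ≤ enorm' x + enorm' y := by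
  rw [enorm'_eq_norm, enorm'_eq_norm, enorm'_eq_norm]
  exact norm_sub_le _ _

lemma my_enorm_smul {n : ℕ} (c : ℝ) (x : Fin n → ℝ) : enorm' (c • x) = |c| * enorm' x := by
  rw [enorm'_eq_norm, enorm'_eq_norm,
    show (WithLp.equiv 2 (Fin n → ℝ)).symm (c • x)
      = c • (WithLp.equiv 2 (Fin n → ℝ)).symm x from rfl, norm_smul, Real.norm_eq_abs]

lemma my_enorm_eq_zero {n : ℕ} {x : Fin n → ℝ} (h : enorm' x = 0) : x = 0 := by
  rw [enorm'_eq_norm, norm_eq_zero] at h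
  exact congrArg (WithLp.equiv 2 (Fin n → ℝ)) h

lemma my_enorm_sq {m : ℕ} (x : Fin m → ℝ) : enorm' x ^ 2 = x ⬝ᵥ x := by
  rw [enorm', Real.sq_sqrt (by positivity)]
  simp [dotProduct, pow_two]

lemma my_dotProduct_le {m : ℕ} (x y : Fin m → ℝ) : x ⬝ᵥ y ≤ enorm' x * enorm' y := by
  have h : x ⬝ᵥ y = (inner ℝ ((WithLp.equiv 2 (Fin m → ℝ)).symm x)
      ((WithLp.equiv 2 (Fin m → ℝ)).symm y) : ℝ) := by
    simp [dotProduct, PiLp.inner_apply, RCLike.inner_apply, mul_comm]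
  rw [h, enorm'_eq_norm, enorm'_eq_norm]
  exact real_inner_le_norm _ _

/-! ### Auxiliary lemmas about `opNorm` -/

lemma my_frob_bound {n m : ℕ} (M : Matrix (Fin n) (Fin m) ℝ) (x : Fin m → ℝ) :
    enorm' (M *ᵥ x) ≤ Real.sqrt (∑ i, ∑ j, M i j ^ 2) * enorm' x := by
  rw [enorm', enorm', ← Real.sqrt_mul (by positivity)]
  apply Real.sqrt_le_sqrt
  calc ∑ i, (M *ᵥ x) i ^ 2 = ∑ i, (∑ j, M i j * x j) ^ 2 := by rfl
    _ ≤ ∑ i, (∑ j, M i j ^ 2) * (∑ j, x j ^ 2) := by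
        refine Finset.sum_le_sum fun i _ => ?_
        exact Finset.sum_mul_sq_le_sq_mul_sq _ _ _
    _ = (∑ i, ∑ j, M i j ^ 2) * ∑ j, x j ^ 2 := by rw [← Finset.sum_mul]

lemma my_bddAbove {n m : ℕ} (M : Matrix (Fin n) (Fin m) ℝ) :
    BddAbove {c : ℝ | ∃ x : Fin m → ℝ, enorm' x = 1 ∧ c = enorm' (M.mulVec x)} := by
  refine ⟨Real.sqrt (∑ i, ∑ j, M i j ^ 2), ?_⟩
  rintro c ⟨x, hx, rfl⟩
  calc enorm' (M *ᵥ x) ≤ Real.sqrt (∑ i, ∑ j, M i j ^ 2) * enorm' x := my_frob_bound M x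
    _ = _ := by rw [hx, mul_one]

lemma my_opNorm_nonneg {n m : ℕ} (M : Matrix (Fin n) (Fin m) ℝ) : 0 ≤ opNorm M := by
  apply Real.sSup_nonneg
  rintro c ⟨x, hx, rfl⟩
  exact my_enorm_nonneg _

lemma my_opNorm_bound {n m : ℕ} (M : Matrix (Fin n) (Fin m) ℝ) (x : Fin m → ℝ) :
    enorm' (M *ᵥ x) ≤ opNorm M * enorm' x := by
  rcases eq_or_lt_of_le (my_enorm_nonneg x) with h | h
  · rw [my_enorm_eq_zero h.symm, mulVec_zero]
    simp [enorm']
  · have hu : enorm' ((enorm' x)⁻¹ • x) = 1 := by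
      rw [my_enorm_smul, abs_of_pos (inv_pos.mpr h), inv_mul_cancel₀ h.ne']
    have hmem : enorm' (M *ᵥ ((enorm' x)⁻¹ • x)) ∈
        {c : ℝ | ∃ y : Fin m → ℝ, enorm' y = 1 ∧ c = enorm' (M.mulVec y)} :=
      ⟨_, hu, rfl⟩
    have hle := le_csSup (my_bddAbove M) hmem
    rw [mulVec_smul, my_enorm_smul, abs_of_pos (inv_pos.mpr h)] at hle
    calc enorm' (M *ᵥ x) = enorm' x * ((enorm' x)⁻¹ * enorm' (M *ᵥ x)) := by
          field_simp
      _ ≤ enorm' x * opNorm M := mul_le_mul_of_nonneg_left hle (le_of_lt h)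
      _ = opNorm M * enorm' x := mul_comm _ _

/-! ### Auxiliary lemmas about `sigmaMin` and the ridge matrix -/

lemma my_sigmaMin_le {m : ℕ} {A : Matrix (Fin m) (Fin m) ℝ} (hA : A.IsHermitian) (i : Fin m) :
    sigmaMin hA ≤ hA.eigenvalues i :=
  ciInf_le (Set.Finite.bddBelow (Set.finite_range _)) i

lemma my_sigmaMin_nonneg {m : ℕ} {A : Matrix (Fin m) (Fin m) ℝ} (hA : A.PosSemidef) :
    0 ≤ sigmaMin hA.1 := by
  rcases isEmpty_or_nonempty (Fin m) with h | h
  · simp [sigmaMin, Real.iInf_of_isEmpty]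
  · exact Real.iInf_nonneg fun i => hA.eigenvalues_nonneg i

lemma my_rayleigh {m : ℕ} {A : Matrix (Fin m) (Fin m) ℝ} (hA : A.IsHermitian) (x : Fin m → ℝ) :
    sigmaMin hA * (x ⬝ᵥ x) ≤ x ⬝ᵥ (A *ᵥ x) := by
  set u := hA.eigenvectorBasis with hu
  set y : EuclideanSpace ℝ (Fin m) := (WithLp.equiv 2 (Fin m → ℝ)).symm x with hy
  have hinner : ∀ z : Fin m → ℝ, ∀ w : EuclideanSpace ℝ (Fin m),
      (inner ℝ w ((WithLp.equiv 2 (Fin m → ℝ)).symm z) : ℝ) = (⇑w : Fin m → ℝ) ⬝ᵥ z := by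
    intro z w
    simp [PiLp.inner_apply, RCLike.inner_apply, dotProduct, mul_comm]
  have h2 : x ⬝ᵥ x = ∑ i, (inner ℝ y (u i) : ℝ) ^ 2 := by
    have := u.sum_inner_mul_inner y y
    have hyy : (inner ℝ y y : ℝ) = x ⬝ᵥ x := by
      simp only [hy, PiLp.inner_apply]; simp [RCLike.inner_apply, dotProduct, pow_two]
    rw [← hyy, ← this]
    congr 1; ext i
    rw [real_inner_comm (u i) y, pow_two]
  have h1 : x ⬝ᵥ (A *ᵥ x) = ∑ i, hA.eigenvalues i * (inner ℝ y (u i) : ℝ) ^ 2 := by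
    have hz : x ⬝ᵥ (A *ᵥ x)
        = (inner ℝ y ((WithLp.equiv 2 (Fin m → ℝ)).symm (A *ᵥ x)) : ℝ) := by
      simp [hy, PiLp.inner_apply, RCLike.inner_apply, dotProduct, mul_comm]
    rw [hz, ← u.sum_inner_mul_inner y ((WithLp.equiv 2 (Fin m → ℝ)).symm (A *ᵥ x))]
    congr 1; ext i
    have hui : (inner ℝ (u i) ((WithLp.equiv 2 (Fin m → ℝ)).symm (A *ᵥ x)) : ℝ)
        = hA.eigenvalues i * (inner ℝ y (u i) : ℝ) := by
      rw [hinner]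
      have hsym : (⇑(u i) : Fin m → ℝ) ⬝ᵥ (A *ᵥ x) = (A *ᵥ ⇑(u i)) ⬝ᵥ x := by
        rw [dotProduct_mulVec, ← mulVec_transpose,
          (conjTranspose_eq_transpose_of_trivial A ▸ hA.eq : Aᵀ = A)]
      rw [hsym, hA.mulVec_eigenvectorBasis, smul_dotProduct, smul_eq_mul]
      congr 1
    rw [hui]; ring
  rw [h1, h2, Finset.mul_sum]
  refine Finset.sum_le_sum fun i _ => ?_
  exact mul_le_mul_of_nonneg_right (my_sigmaMin_le hA i) (sq_nonneg _)

lemma my_posDef {m : ℕ} {S : Matrix (Fin m) (Fin m) ℝ} (hS : S.PosSemidef)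
    {lam : ℝ} (hlam : 0 < lam) :
    (S + lam • (1 : Matrix (Fin m) (Fin m) ℝ)).PosDef :=
  Matrix.PosDef.posSemidef_add hS (by
    rw [smul_one_eq_diagonal]
    exact Matrix.PosDef.diagonal fun _ => hlam)

lemma my_cancel {m : ℕ} {S : Matrix (Fin m) (Fin m) ℝ} (hS : S.PosSemidef)
    {lam : ℝ} (hlam : 0 < lam) (w : Fin m → ℝ) :
    (S + lam • (1 : Matrix (Fin m) (Fin m) ℝ)) *ᵥ
      ((S + lam • (1 : Matrix (Fin m) (Fin m) ℝ))⁻¹ *ᵥ w) = w := by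
  have hdet : IsUnit (S + lam • (1 : Matrix (Fin m) (Fin m) ℝ)).det :=
    (Matrix.isUnit_iff_isUnit_det _).mp (my_posDef hS hlam).isUnit
  rw [mulVec_mulVec, Matrix.mul_nonsing_inv _ hdet, one_mulVec]

lemma my_cancel' {m : ℕ} {S : Matrix (Fin m) (Fin m) ℝ} (hS : S.PosSemidef)
    {lam : ℝ} (hlam : 0 < lam) (z : Fin m → ℝ) :
    (S + lam • (1 : Matrix (Fin m) (Fin m) ℝ))⁻¹ *ᵥ
      ((S + lam • (1 : Matrix (Fin m) (Fin m) ℝ)) *ᵥ z) = z := by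
  have hdet : IsUnit (S + lam • (1 : Matrix (Fin m) (Fin m) ℝ)).det :=
    (Matrix.isUnit_iff_isUnit_det _).mp (my_posDef hS hlam).isUnit
  rw [mulVec_mulVec, Matrix.nonsing_inv_mul _ hdet, one_mulVec]

lemma my_inv_bound {m : ℕ} {S : Matrix (Fin m) (Fin m) ℝ} (hS : S.PosSemidef)
    {lam : ℝ} (hlam : 0 < lam) (w : Fin m → ℝ) :
    enorm' ((S + lam • (1 : Matrix (Fin m) (Fin m) ℝ))⁻¹ *ᵥ w)
      ≤ enorm' w / (sigmaMin hS.1 + lam) := by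
  have hc : 0 < sigmaMin hS.1 + lam := add_pos_of_nonneg_of_pos (my_sigmaMin_nonneg hS) hlam
  set x := (S + lam • (1 : Matrix (Fin m) (Fin m) ℝ))⁻¹ *ᵥ w with hx
  have hBx : (S + lam • (1 : Matrix (Fin m) (Fin m) ℝ)) *ᵥ x = w := my_cancel hS hlam w
  have key : (sigmaMin hS.1 + lam) * enorm' x ^ 2 ≤ enorm' x * enorm' w := by
    have h1 : x ⬝ᵥ w = x ⬝ᵥ (S *ᵥ x) + lam * (x ⬝ᵥ x) := by
      rw [← hBx, add_mulVec, dotProduct_add, smul_mulVec, one_mulVec, dotProduct_smul,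
        smul_eq_mul]
    have h2 := my_rayleigh hS.1 x
    have h3 : x ⬝ᵥ w ≤ enorm' x * enorm' w := my_dotProduct_le x w
    rw [my_enorm_sq]
    nlinarith
  rcases eq_or_lt_of_le (my_enorm_nonneg x) with h | h
  · rw [← h]; exact div_nonneg (my_enorm_nonneg w) hc.le
  · rw [le_div_iff₀ hc]
    nlinarith

/-- Combined error bound for ridge fit-and-transfer (Theorem 1 of the paper):
the prediction error splits into a structural error `‖r‖₂` and an estimation
error, and the structural error is itself bounded. -/
theorem ridge_fit_and_transfer_error_bound
    (n m d : ℕ) (lam : ℝ) (hlam : 0 < lam)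
    (U : Matrix (Fin n) (Fin d) ℝ)
    (V : Matrix (Fin m) (Fin d) ℝ)
    (E : Matrix (Fin n) (Fin m) ℝ)
    (Ev : Fin n → ℝ)
    (v : Fin d → ℝ) (b : Fin m → ℝ) (e : Fin d → ℝ)
    (hv : v = V.transpose.mulVec b + e)
    (Y : Matrix (Fin n) (Fin m) ℝ) (hY : Y = U * V.transpose + E)
    (Yv : Fin n → ℝ) (hYv : Yv = U.mulVec v + Ev)
    (St Sh : Matrix (Fin m) (Fin m) ℝ)
    (hSt : St.PosSemidef) (hSh : Sh.PosSemidef)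
    (γt γh : Fin m → ℝ)
    (βstar βhat : Fin m → ℝ)
    (hβstar : βstar = (St + lam • (1 : Matrix (Fin m) (Fin m) ℝ))⁻¹.mulVec γt)
    (hβhat : βhat = (Sh + lam • (1 : Matrix (Fin m) (Fin m) ℝ))⁻¹.mulVec γh)
    (Yhat : Fin n → ℝ) (hYhat : Yhat = Y.mulVec βhat)
    (r : Fin n → ℝ) (hr : r = Yv - Y.mulVec βstar) :
    enorm' (Yhat - Yv) ≤
      enorm' r +
        (opNorm Y / (sigmaMin hSh.1 + lam)) *
          (opNorm (Sh - St) * enorm' βstar + enorm' (γh - γt)) ∧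
    enorm' r ≤
      enorm' (U.mulVec e) + enorm' (Ev - E.mulVec b) +
        (opNorm Y / (sigmaMin hSt.1 + lam)) *
          (lam * enorm' b + enorm' (γt - St.mulVec b)) := by
  have hct : 0 < sigmaMin hSt.1 + lam :=
    add_pos_of_nonneg_of_pos (my_sigmaMin_nonneg hSt) hlam
  have hch : 0 < sigmaMin hSh.1 + lam :=
    add_pos_of_nonneg_of_pos (my_sigmaMin_nonneg hSh) hlam
  have hYnn := my_opNorm_nonneg Y
  -- basic facts about βstar, βhat
  have h_t : (St + lam • (1 : Matrix (Fin m) (Fin m) ℝ)) *ᵥ βstar = γt := by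
    rw [hβstar]; exact my_cancel hSt hlam γt
  have h_h : (Sh + lam • (1 : Matrix (Fin m) (Fin m) ℝ)) *ᵥ βhat = γh := by
    rw [hβhat]; exact my_cancel hSh hlam γh
  constructor
  · -- first bound
    have e1 : (Sh + lam • (1 : Matrix (Fin m) (Fin m) ℝ)) *ᵥ (βhat - βstar)
        = (γh - γt) - (Sh - St) *ᵥ βstar := by
      rw [mulVec_sub, h_h, ← h_t]
      simp only [add_mulVec, sub_mulVec]
      abel
    have hdiff : βhat - βstar
        = (Sh + lam • (1 : Matrix (Fin m) (Fin m) ℝ))⁻¹ *ᵥ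
            ((γh - γt) - (Sh - St) *ᵥ βstar) := by
      rw [← e1, my_cancel' hSh hlam]
    have hbd : enorm' (βhat - βstar)
        ≤ (opNorm (Sh - St) * enorm' βstar + enorm' (γh - γt)) / (sigmaMin hSh.1 + lam) := by
      rw [hdiff]
      refine le_trans (my_inv_bound hSh hlam _) ?_
      refine div_le_div_of_nonneg_right ?_ hch.le
      refine (my_enorm_sub_le _ _).trans ?_
      have := my_opNorm_bound (Sh - St) βstar
      linarith
    have hsplit : Yhat - Yv = Y *ᵥ (βhat - βstar) - r := by
      rw [hYhat, hr, mulVec_sub]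
      abel
    calc enorm' (Yhat - Yv) = enorm' (Y *ᵥ (βhat - βstar) - r) := by rw [hsplit]
      _ ≤ enorm' (Y *ᵥ (βhat - βstar)) + enorm' r := my_enorm_sub_le _ _
      _ ≤ opNorm Y * enorm' (βhat - βstar) + enorm' r :=
          add_le_add_left (my_opNorm_bound _ _) _
      _ ≤ opNorm Y * ((opNorm (Sh - St) * enorm' βstar + enorm' (γh - γt))
            / (sigmaMin hSh.1 + lam)) + enorm' r :=
          add_le_add_left (mul_le_mul_of_nonneg_left hbd hYnn) _
      _ = enorm' r + (opNorm Y / (sigmaMin hSh.1 + lam)) *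
            (opNorm (Sh - St) * enorm' βstar + enorm' (γh - γt)) := by ring
  · -- second bound
    have e2 : (St + lam • (1 : Matrix (Fin m) (Fin m) ℝ)) *ᵥ (b - βstar)
        = lam • b - (γt - St *ᵥ b) := by
      rw [mulVec_sub, h_t]
      simp only [add_mulVec, smul_mulVec, one_mulVec]
      abel
    have hbdiff : b - βstar
        = (St + lam • (1 : Matrix (Fin m) (Fin m) ℝ))⁻¹ *ᵥ
            (lam • b - (γt - St *ᵥ b)) := by
      rw [← e2, my_cancel' hSt hlam]
    have hbd2 : enorm' (b - βstar)
        ≤ (lam * enorm' b + enorm' (γt - St *ᵥ b)) / (sigmaMin hSt.1 + lam) := by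
      rw [hbdiff]
      refine le_trans (my_inv_bound hSt hlam _) ?_
      refine div_le_div_of_nonneg_right ?_ hct.le
      refine (my_enorm_sub_le _ _).trans ?_
      rw [my_enorm_smul, abs_of_pos hlam]
    have hrdec : r = U *ᵥ e + (Ev - E *ᵥ b) + Y *ᵥ (b - βstar) := by
      rw [hr, hYv, hv, hY]
      simp only [mulVec_add, add_mulVec, mulVec_sub, ← mulVec_mulVec]
      abel
    calc enorm' r = enorm' ((U *ᵥ e + (Ev - E *ᵥ b)) + Y *ᵥ (b - βstar)) := by
          rw [hrdec]
      _ ≤ enorm' (U *ᵥ e + (Ev - E *ᵥ b)) + enorm' (Y *ᵥ (b - βstar)) :=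
          my_enorm_add_le _ _
      _ ≤ (enorm' (U *ᵥ e) + enorm' (Ev - E *ᵥ b)) + enorm' (Y *ᵥ (b - βstar)) :=
          add_le_add_left (my_enorm_add_le _ _) _
      _ ≤ (enorm' (U *ᵥ e) + enorm' (Ev - E *ᵥ b)) + opNorm Y * enorm' (b - βstar) :=
          add_le_add_right (my_opNorm_bound _ _) _
      _ ≤ (enorm' (U *ᵥ e) + enorm' (Ev - E *ᵥ b)) + opNorm Y *
            ((lam * enorm' b + enorm' (γt - St *ᵥ b)) / (sigmaMin hSt.1 + lam)) :=
          add_le_add_right (mul_le_mul_of_nonneg_left hbd2 hYnn) _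
      _ = enorm' (U *ᵥ e) + enorm' (Ev - E *ᵥ b) +
            (opNorm Y / (sigmaMin hSt.1 + lam)) *
              (lam * enorm' b + enorm' (γt - St *ᵥ b)) := by ring
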